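/- In the Grigorchuk group G, the parabolic subgroup P_n = Stab_G(1^n) has exactly n+1 orbits on the n-th level Σ^n of the binary tree: the singleton {1^n} and the sets 1^i 0 Σ^{n-1-i} for 0 ≤ i < n. Equivalently, there are exactly n+1 double cosets P_n g P_n in G. -/

import Mathlib

/-- The rooted automorphism `a` of the binary tree: it flips the first letter. -/
def gaFun : List Bool → List Bool
  | [] => []
  | s :: t => (!s) :: t

mutual
  /-- The generator `b` of the Grigorchuk group: `φ(b) = (a, c)`. -/
  def gbFun : List Bool → List Bool
    | [] => []
    | false :: t => false :: gaFun t
    | true :: t => true :: gcFun t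
  /-- The generator `c` of the Grigorchuk group: `φ(c) = (a, d)`. -/
  def gcFun : List Bool → List Bool
    | [] => []
    | false :: t => false :: gaFun t
    | true :: t => true :: gdFun t
  /-- The generator `d` of the Grigorchuk group: `φ(d) = (1, b)`. -/
  def gdFun : List Bool → List Bool
    | [] => []
    | false :: t => false :: t
    | true :: t => true :: gbFun t
end

theorem gaFun_involutive : Function.Involutive gaFun := by
  intro t
  cases t with
  | nil => rfl
  | cons s r => cases s <;> rfl

theorem gbcd_involutive :
    ∀ t : List Bool, gbFun (gbFun t) = t ∧ gcFun (gcFun t) = t ∧ gdFun (gdFun t) = t := by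
  intro t
  induction t with
  | nil => exact ⟨rfl, rfl, rfl⟩
  | cons s r ih =>
    cases s <;>
      simp [gbFun, gcFun, gdFun, gaFun_involutive r, ih.1, ih.2.1, ih.2.2]

/-- The generator `a` as a tree automorphism. -/
def ga : Equiv.Perm (List Bool) := Function.Involutive.toPerm gaFun gaFun_involutive

/-- The generator `b` as a tree automorphism. -/
def gb : Equiv.Perm (List Bool) := Function.Involutive.toPerm gbFun fun t => (gbcd_involutive t).1

/-- The generator `c` as a tree automorphism. -/
def gc : Equiv.Perm (List Bool) := Function.Involutive.toPerm gcFun fun t => (gbcd_involutive t).2.1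

/-- The generator `d` as a tree automorphism. -/
def gd : Equiv.Perm (List Bool) := Function.Involutive.toPerm gdFun fun t => (gbcd_involutive t).2.2

/-- The Grigorchuk group, as the subgroup of `Aut(T₂)` generated by `a, b, c, d`. -/
def grig : Subgroup (Equiv.Perm (List Bool)) := Subgroup.closure {ga, gb, gc, gd}


/-- The stabilizer in the Grigorchuk group of the vertex `1^n`. -/
def grigP (n : ℕ) : Subgroup grig := MulAction.stabilizer grig (List.replicate n true)

section PP
open Equiv

/-- pair of permutations acting on the two subtrees -/
def ppFun (f g : List Bool → List Bool) : List Bool → List Bool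
  | [] => []
  | false :: t => false :: f t
  | true :: t => true :: g t

def pp (f g : Equiv.Perm (List Bool)) : Equiv.Perm (List Bool) where
  toFun := ppFun f g
  invFun := ppFun ⇑f⁻¹ ⇑g⁻¹
  left_inv := by intro l; rcases l with _ | ⟨_ | _, t⟩ <;> simp [ppFun]
  right_inv := by intro l; rcases l with _ | ⟨_ | _, t⟩ <;> simp [ppFun]

@[simp] theorem pp_nil (f g : Equiv.Perm (List Bool)) : pp f g [] = [] := rfl
@[simp] theorem pp_false (f g : Equiv.Perm (List Bool)) (l : List Bool) :
    pp f g (false :: l) = false :: f l := rfl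
@[simp] theorem pp_true (f g : Equiv.Perm (List Bool)) (l : List Bool) :
    pp f g (true :: l) = true :: g l := rfl

theorem pp_mul (f g f' g' : Equiv.Perm (List Bool)) :
    pp f g * pp f' g' = pp (f * f') (g * g') := by
  ext l; rcases l with _ | ⟨_ | _, t⟩ <;> simp [Equiv.Perm.mul_apply]

theorem pp_inv (f g : Equiv.Perm (List Bool)) : (pp f g)⁻¹ = pp f⁻¹ g⁻¹ := by
  ext l; rcases l with _ | ⟨_ | _, t⟩ <;> rfl

theorem pp_one : pp 1 1 = (1 : Equiv.Perm (List Bool)) := by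
  ext l; rcases l with _ | ⟨_ | _, t⟩ <;> simp

@[simp] theorem ga_apply (l : List Bool) : ga l = gaFun l := rfl
@[simp] theorem gb_apply (l : List Bool) : gb l = gbFun l := rfl
@[simp] theorem gc_apply (l : List Bool) : gc l = gcFun l := rfl
@[simp] theorem gd_apply (l : List Bool) : gd l = gdFun l := rfl

theorem ga_pp (f g : Equiv.Perm (List Bool)) : ga * pp f g * ga = pp g f := by
  ext l; rcases l with _ | ⟨_ | _, t⟩ <;> simp [Equiv.Perm.mul_apply, gaFun]

theorem gb_eq : gb = pp ga gc := by
  ext l; rcases l with _ | ⟨_ | _, t⟩ <;> rfl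
theorem gc_eq : gc = pp ga gd := by
  ext l; rcases l with _ | ⟨_ | _, t⟩ <;> rfl
theorem gd_eq : gd = pp 1 gb := by
  ext l; rcases l with _ | ⟨_ | _, t⟩ <;> rfl

@[simp] theorem ga_sq : ga * ga = 1 := by ext l; simp [Equiv.Perm.mul_apply, gaFun_involutive l]
@[simp] theorem gb_sq : gb * gb = 1 := by ext l; simp [Equiv.Perm.mul_apply, (gbcd_involutive l).1]
@[simp] theorem gc_sq : gc * gc = 1 := by ext l; simp [Equiv.Perm.mul_apply, (gbcd_involutive l).2.1]
@[simp] theorem gd_sq : gd * gd = 1 := by ext l; simp [Equiv.Perm.mul_apply, (gbcd_involutive l).2.2]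

@[simp] theorem ga_inv : ga⁻¹ = ga := inv_eq_of_mul_eq_one_right ga_sq
@[simp] theorem gb_inv : gb⁻¹ = gb := inv_eq_of_mul_eq_one_right gb_sq
@[simp] theorem gc_inv : gc⁻¹ = gc := inv_eq_of_mul_eq_one_right gc_sq
@[simp] theorem gd_inv : gd⁻¹ = gd := inv_eq_of_mul_eq_one_right gd_sq

theorem klein_fun : ∀ l : List Bool,
    gbFun (gcFun l) = gdFun l ∧ gcFun (gdFun l) = gbFun l ∧ gdFun (gbFun l) = gcFun l := by
  intro l
  induction l with
  | nil => exact ⟨rfl, rfl, rfl⟩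
  | cons s t ih =>
    cases s <;> simp [gbFun, gcFun, gdFun, gaFun_involutive t, ih.1, ih.2.1, ih.2.2]

theorem gb_mul_gc : gb * gc = gd := by ext l; simp [Equiv.Perm.mul_apply, (klein_fun l).1]
theorem gc_mul_gd : gc * gd = gb := by ext l; simp [Equiv.Perm.mul_apply, (klein_fun l).2.1]
theorem gd_mul_gb : gd * gb = gc := by ext l; simp [Equiv.Perm.mul_apply, (klein_fun l).2.2]

theorem gc_mul_gb : gc * gb = gd := by
  have := congrArg (·⁻¹) gb_mul_gc; simpa [mul_inv_rev] using this
theorem gd_mul_gc : gd * gc = gb := by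
  have := congrArg (·⁻¹) gc_mul_gd; simpa [mul_inv_rev] using this
theorem gb_mul_gd : gb * gd = gc := by
  have := congrArg (·⁻¹) gd_mul_gb; simpa [mul_inv_rev] using this

end PP
section KGroup

/-- t = (ab)^2 -/
def tt : Equiv.Perm (List Bool) := ga * gb * ga * gb

theorem tt_eq : tt = pp (gc * ga) (ga * gc) := by
  have h1 : ga * gb * ga = pp gc ga := by rw [gb_eq, ga_pp]
  calc tt = (ga * gb * ga) * gb := by rw [tt]
  _ = pp gc ga * pp ga gc := by rw [h1, gb_eq]
  _ = pp (gc * ga) (ga * gc) := pp_mul _ _ _ _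

theorem tt_inv : tt⁻¹ = gb * ga * gb * ga := by
  rw [tt]; simp [mul_inv_rev, mul_assoc]

theorem ga_mem : ga ∈ grig := Subgroup.subset_closure (by simp)
theorem gb_mem : gb ∈ grig := Subgroup.subset_closure (by simp)
theorem gc_mem : gc ∈ grig := Subgroup.subset_closure (by simp)
theorem gd_mem : gd ∈ grig := Subgroup.subset_closure (by simp)
theorem tt_mem : tt ∈ grig := by
  rw [tt]; exact mul_mem (mul_mem (mul_mem ga_mem gb_mem) ga_mem) gb_mem

/-- K = normal closure of tt in grig -/
def KK : Subgroup (Equiv.Perm (List Bool)) :=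
  Subgroup.closure {x | ∃ g ∈ grig, x = g * tt * g⁻¹}

theorem tt_mem_KK : tt ∈ KK :=
  Subgroup.subset_closure ⟨1, one_mem _, by group⟩

theorem KK_le_grig : KK ≤ grig := by
  rw [KK, Subgroup.closure_le]
  rintro x ⟨g, hg, rfl⟩
  exact mul_mem (mul_mem hg tt_mem) (inv_mem hg)

theorem KK_norm {g : Equiv.Perm (List Bool)} (hg : g ∈ grig) :
    ∀ {k}, k ∈ KK → g * k * g⁻¹ ∈ KK := by
  intro k hk
  induction hk using Subgroup.closure_induction with
  | mem x hx =>
    obtain ⟨h, hh, rfl⟩ := hx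
    refine Subgroup.subset_closure ⟨g * h, mul_mem hg hh, by group⟩
  | one => simpa using one_mem KK
  | mul x y hx hy px py =>
    have : g * (x * y) * g⁻¹ = (g * x * g⁻¹) * (g * y * g⁻¹) := by group
    rw [this]; exact mul_mem px py
  | inv x hx px =>
    have : g * x⁻¹ * g⁻¹ = (g * x * g⁻¹)⁻¹ := by group
    rw [this]; exact inv_mem px

/-- key identity : (aca) t (aca) t = (t⁻¹, 1) -/
theorem key_identity : (ga * gc * ga) * tt * (ga * gc * ga) * tt = pp tt⁻¹ 1 := by
  rw [tt_inv]
  have haca : ga * gc * ga = pp gd ga := by rw [gc_eq, ga_pp]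
  conv_lhs => rw [tt_eq, haca]
  rw [show pp gd ga * pp (gc * ga) (ga * gc) * pp gd ga * pp (gc * ga) (ga * gc)
      = pp (gd * (gc * ga) * gd * (gc * ga)) (ga * (ga * gc) * ga * (ga * gc)) by
    rw [pp_mul, pp_mul, pp_mul]]
  congr 1
  · have h1 : gd * (gc * ga) * gd * (gc * ga) = (gd * gc) * ga * (gd * gc) * ga := by group
    rw [h1, gd_mul_gc]
  · have h2 : ga * (ga * gc) * ga * (ga * gc) = (ga * ga) * gc * ((ga * ga) * gc) := by group
    rw [h2, ga_sq]; simp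

theorem pp_tt_one_mem : pp tt 1 ∈ KK := by
  have h := key_identity
  have hj : (ga * gc * ga)⁻¹ = ga * gc * ga := by simp [mul_inv_rev, mul_assoc]
  have h2 : pp tt 1 = ((ga * gc * ga) * tt * (ga * gc * ga) * tt)⁻¹ := by
    rw [h, pp_inv, inv_one, inv_inv]
  rw [h2]
  have h3 : ((ga * gc * ga) * tt * (ga * gc * ga) * tt)⁻¹
      = tt⁻¹ * ((ga * gc * ga) * tt⁻¹ * (ga * gc * ga)⁻¹) := by
    simp [mul_inv_rev, mul_assoc]
  rw [h3]
  exact mul_mem (inv_mem tt_mem_KK)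
    (KK_norm (mul_mem (mul_mem ga_mem gc_mem) ga_mem) (inv_mem tt_mem_KK))

/-- section lifting: any g in grig appears as a section at 0 of an element of grig -/
theorem lift0 : ∀ {g}, g ∈ grig → ∃ y, pp g y ∈ grig := by
  intro g hg
  induction hg using Subgroup.closure_induction with
  | mem x hx =>
    rcases hx with h | h | h | h
    · exact ⟨gc, by rw [h, ← gb_eq]; exact gb_mem⟩
    · refine ⟨1, ?_⟩
      have : pp x 1 = ga * gd * ga := by rw [h, gd_eq, ga_pp]
      rw [this]; exact mul_mem (mul_mem ga_mem gd_mem) ga_mem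
    · refine ⟨ga, ?_⟩
      have : pp x ga = ga * gb * ga := by rw [h, gb_eq, ga_pp]
      rw [this]; exact mul_mem (mul_mem ga_mem gb_mem) ga_mem
    · refine ⟨ga, ?_⟩
      have : pp x ga = ga * gc * ga := by rw [h, gc_eq, ga_pp]
      rw [this]; exact mul_mem (mul_mem ga_mem gc_mem) ga_mem
  | one => exact ⟨1, by rw [pp_one]; exact one_mem _⟩
  | mul x y hx hy px py =>
    obtain ⟨u, hu⟩ := px; obtain ⟨v, hv⟩ := py
    exact ⟨u * v, by rw [← pp_mul]; exact mul_mem hu hv⟩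
  | inv x hx px =>
    obtain ⟨u, hu⟩ := px
    exact ⟨u⁻¹, by rw [← pp_inv]; exact inv_mem hu⟩

theorem lift1 : ∀ {g}, g ∈ grig → ∃ y, pp y g ∈ grig := by
  intro g hg
  obtain ⟨y, hy⟩ := lift0 hg
  refine ⟨y, ?_⟩
  have : pp y g = ga * pp g y * ga := by rw [ga_pp]
  rw [this]; exact mul_mem (mul_mem ga_mem hy) ga_mem

/-- K contains K x 1 and 1 x K -/
theorem ppKK : ∀ {k}, k ∈ KK → pp k 1 ∈ KK ∧ pp 1 k ∈ KK := by
  have half : ∀ {k}, k ∈ KK → pp k 1 ∈ KK := by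
    intro k hk
    induction hk using Subgroup.closure_induction with
    | mem x hx =>
      obtain ⟨h, hh, rfl⟩ := hx
      obtain ⟨y, hy⟩ := lift0 hh
      have : pp (h * tt * h⁻¹) 1 = pp h y * pp tt 1 * (pp h y)⁻¹ := by
        rw [pp_inv, pp_mul, pp_mul]; congr 1 <;> group
      rw [this]
      exact KK_norm hy pp_tt_one_mem
    | one => rw [pp_one]; exact one_mem _
    | mul x y hx hy px py =>
      have : pp (x * y) 1 = pp x 1 * pp y 1 := by rw [pp_mul, mul_one]
      rw [this]; exact mul_mem px py
    | inv x hx px =>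
      have : pp x⁻¹ 1 = (pp x 1)⁻¹ := by rw [pp_inv, inv_one]
      rw [this]; exact inv_mem px
  intro k hk
  refine ⟨half hk, ?_⟩
  have : pp 1 k = ga * pp k 1 * ga⁻¹ := by rw [ga_inv, ga_pp]
  rw [this]; exact KK_norm ga_mem (half hk)

end KGroup
section Pres

theorem len_a : ∀ l : List Bool, (gaFun l).length = l.length := by
  intro l; cases l with
  | nil => rfl
  | cons s t => cases s <;> rfl

theorem len_bcd : ∀ l : List Bool,
    (gbFun l).length = l.length ∧ (gcFun l).length = l.length ∧ (gdFun l).length = l.length := by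
  intro l
  induction l with
  | nil => exact ⟨rfl, rfl, rfl⟩
  | cons s t ih =>
    cases s <;> simp [gbFun, gcFun, gdFun, len_a, ih.1, ih.2.1, ih.2.2]

theorem take_a : ∀ (l : List Bool) (k : ℕ), (gaFun l).take k = gaFun (l.take k) := by
  intro l k
  cases l with
  | nil => simp [gaFun]
  | cons s t =>
    cases k with
    | zero => rfl
    | succ k => cases s <;> rfl

theorem take_bcd : ∀ (l : List Bool) (k : ℕ),
    (gbFun l).take k = gbFun (l.take k) ∧ (gcFun l).take k = gcFun (l.take k) ∧
      (gdFun l).take k = gdFun (l.take k) := by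
  intro l
  induction l with
  | nil => intro k; simp [gbFun, gcFun, gdFun]
  | cons s t ih =>
    intro k
    cases k with
    | zero => exact ⟨rfl, rfl, rfl⟩
    | succ k =>
      cases s <;>
        simp [gbFun, gcFun, gdFun, take_a, (ih k).1, (ih k).2.1, (ih k).2.2]

/-- members of grig preserve length and commute with take -/
def Pres (f : Equiv.Perm (List Bool)) : Prop :=
  (∀ l, (f l).length = l.length) ∧ ∀ l k, (f l).take k = f (l.take k)

theorem pres_grig : ∀ {g}, g ∈ grig → Pres g := by
  intro g hg
  induction hg using Subgroup.closure_induction with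
  | mem x hx =>
    rcases hx with h | h | h | h <;> subst h
    · exact ⟨fun l => len_a l, fun l k => take_a l k⟩
    · exact ⟨fun l => (len_bcd l).1, fun l k => (take_bcd l k).1⟩
    · exact ⟨fun l => (len_bcd l).2.1, fun l k => (take_bcd l k).2.1⟩
    · exact ⟨fun l => (len_bcd l).2.2, fun l k => (take_bcd l k).2.2⟩
  | one => exact ⟨fun l => rfl, fun l k => rfl⟩
  | mul x y hx hy px py =>
    refine ⟨fun l => ?_, fun l k => ?_⟩
    · simp only [Equiv.Perm.mul_apply]; rw [px.1, py.1]
    · simp only [Equiv.Perm.mul_apply]; rw [px.2, py.2]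
  | inv x hx px =>
    refine ⟨fun l => ?_, fun l k => ?_⟩
    · have := px.1 (x⁻¹ l); rw [show x (x⁻¹ l) = l from by simp] at this; omega
    · have h := px.2 (x⁻¹ l) k
      rw [show x (x⁻¹ l) = l from by simp] at h
      have h2 := congrArg (⇑x⁻¹) h
      rw [show x⁻¹ (x ((x⁻¹ l).take k)) = (x⁻¹ l).take k from by simp] at h2
      exact h2.symm

end Pres

section Cnt

/-- number of leading `true`s -/
def cnt (l : List Bool) : ℕ := (l.takeWhile (fun s => s)).length

@[simp] theorem cnt_nil : cnt [] = 0 := rfl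
@[simp] theorem cnt_false (l : List Bool) : cnt (false :: l) = 0 := rfl
@[simp] theorem cnt_true (l : List Bool) : cnt (true :: l) = cnt l + 1 := by
  simp [cnt, List.takeWhile]

theorem cnt_le (l : List Bool) : cnt l ≤ l.length := by
  induction l with
  | nil => simp
  | cons s t ih => cases s <;> simp <;> omega

theorem take_cnt (l : List Bool) : l.take (cnt l) = List.replicate (cnt l) true := by
  induction l with
  | nil => simp
  | cons s t ih =>
    cases s
    · simp
    · simp only [cnt_true, List.take_succ_cons, List.replicate_succ, ih]

theorem cnt_ge : ∀ (i : ℕ) (l : List Bool), l.take i = List.replicate i true → i ≤ cnt l := by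
  intro i
  induction i with
  | zero => intro l _; omega
  | succ i ih =>
    intro l h
    cases l with
    | nil => simp at h
    | cons s t =>
      rw [List.take_succ_cons, List.replicate_succ] at h
      obtain ⟨rfl, ht⟩ := List.cons_eq_cons.mp h
      have := ih t ht
      simp; omega

theorem cnt_replicate (n : ℕ) : cnt (List.replicate n true) = n := by
  induction n with
  | zero => simp
  | succ n ih => rw [List.replicate_succ, cnt_true, ih]

theorem cnt_spine_false (k : ℕ) (r : List Bool) :
    cnt (List.replicate k true ++ false :: r) = k := by
  induction k with
  | zero => simp
  | succ k ih => rw [List.replicate_succ, List.cons_append, cnt_true, ih]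

theorem cnt_le_of_stab {g : Equiv.Perm (List Bool)} (hg : g ∈ grig) {n : ℕ}
    (hst : g (List.replicate n true) = List.replicate n true) {w : List Bool}
    (hw : w.length = n) : cnt w ≤ cnt (g w) := by
  have hp := pres_grig hg
  have hile : cnt w ≤ n := hw ▸ cnt_le w
  have h1 : w.take (cnt w) = (List.replicate n true).take (cnt w) := by
    rw [take_cnt, List.take_replicate, min_eq_left hile]
  have h2 : (g w).take (cnt w) = List.replicate (cnt w) true := by
    rw [hp.2, h1, ← hp.2, hst, List.take_replicate, min_eq_left hile]
  exact cnt_ge _ _ h2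

theorem cnt_stab_eq {g : Equiv.Perm (List Bool)} (hg : g ∈ grig) {n : ℕ}
    (hst : g (List.replicate n true) = List.replicate n true) {w : List Bool}
    (hw : w.length = n) : cnt (g w) = cnt w := by
  refine le_antisymm ?_ (cnt_le_of_stab hg hst hw)
  have hg' : g⁻¹ ∈ grig := inv_mem hg
  have hst' : g⁻¹ (List.replicate n true) = List.replicate n true := by
    conv_lhs => rw [← hst]
    simp
  have hlen : (g w).length = n := by rw [(pres_grig hg).1, hw]
  have := cnt_le_of_stab hg' hst' hlen
  rwa [show g⁻¹ (g w) = w from by simp] at this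

end Cnt
section Trans

theorem Ktrans : ∀ (m : ℕ) (e : Bool) (x y : List Bool), x.length = m → y.length = m →
    ∃ k, k ∈ KK ∧ k (e :: x) = e :: y := by
  intro m
  induction m with
  | zero =>
    intro e x y hx hy
    rw [List.length_eq_zero_iff] at hx hy; subst hx; subst hy
    exact ⟨1, one_mem _, rfl⟩
  | succ m ih =>
    intro e x y hx hy
    rcases x with _ | ⟨s, x'⟩; · simp at hx
    rcases y with _ | ⟨s', y'⟩; · simp at hy
    simp only [List.length_cons, Nat.add_one_inj] at hx hy
    have same : ∀ (e s : Bool) (u v : List Bool), u.length = m → v.length = m →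
        ∃ k, k ∈ KK ∧ k (e :: s :: u) = e :: s :: v := by
      intro e s u v hu hv
      obtain ⟨k₀, hk₀, hap⟩ := ih s u v hu hv
      cases e
      · exact ⟨pp k₀ 1, (ppKK hk₀).1, by simp [hap]⟩
      · exact ⟨pp 1 k₀, (ppKK hk₀).2, by simp [hap]⟩
    cases s <;> cases s'
    · exact same e false x' y' hx hy
    · -- flip false → true
      have htt : ∃ u : List Bool, u.length = m ∧ tt (e :: false :: x') = e :: true :: u := by
        cases e
        · exact ⟨gdFun x', (len_bcd x').2.2.trans hx, by
            simp [tt_eq, Equiv.Perm.mul_apply, gaFun, gcFun]⟩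
        · exact ⟨gaFun x', (len_a x').trans hx, by
            simp [tt_eq, Equiv.Perm.mul_apply, gaFun, gcFun]⟩
      obtain ⟨u, hu, htt⟩ := htt
      obtain ⟨k₁, hk₁, hap1⟩ := same e true u y' hu hy
      exact ⟨k₁ * tt, mul_mem hk₁ tt_mem_KK, by rw [Equiv.Perm.mul_apply, htt, hap1]⟩
    · -- flip true → false
      have htt : ∃ u : List Bool, u.length = m ∧ tt (e :: true :: x') = e :: false :: u := by
        cases e
        · exact ⟨gaFun x', (len_a x').trans hx, by
            simp [tt_eq, Equiv.Perm.mul_apply, gaFun, gcFun]⟩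
        · exact ⟨gdFun x', (len_bcd x').2.2.trans hx, by
            simp [tt_eq, Equiv.Perm.mul_apply, gaFun, gcFun]⟩
      obtain ⟨u, hu, htt⟩ := htt
      obtain ⟨k₁, hk₁, hap1⟩ := same e false u y' hu hy
      exact ⟨k₁ * tt, mul_mem hk₁ tt_mem_KK, by rw [Equiv.Perm.mul_apply, htt, hap1]⟩
    · exact same e true x' y' hx hy

theorem Qtrans : ∀ (m : ℕ) (x y : List Bool), x.length = m → y.length = m →
    ∃ h, h ∈ grig ∧ h (List.replicate (m + 1) true) = List.replicate (m + 1) true ∧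
      h (false :: x) = false :: y := by
  intro m
  induction m with
  | zero =>
    intro x y hx hy
    rw [List.length_eq_zero_iff] at hx hy; subst hx; subst hy
    exact ⟨1, one_mem _, rfl, rfl⟩
  | succ m _ =>
    intro x y hx hy
    rcases x with _ | ⟨s, x'⟩; · simp at hx
    rcases y with _ | ⟨s', y'⟩; · simp at hy
    simp only [List.length_cons, Nat.add_one_inj] at hx hy
    have same : ∀ (s : Bool) (u v : List Bool), u.length = m → v.length = m →
        ∃ h, h ∈ grig ∧
          h (List.replicate (m + 2) true) = List.replicate (m + 2) true ∧
          h (false :: s :: u) = false :: s :: v := by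
      intro s u v hu hv
      obtain ⟨k, hk, hap⟩ := Ktrans m s u v hu hv
      refine ⟨pp k 1, KK_le_grig (ppKK hk).1, ?_, by simp [hap]⟩
      rw [List.replicate_succ]
      simp
    cases s <;> cases s'
    · exact same false x' y' hx hy
    · -- flip false → true
      obtain ⟨k, hk, hkap⟩ := Ktrans m true (List.replicate m true) (gdFun (List.replicate m true))
        (by simp) ((len_bcd _).2.2.trans (by simp))
      have hspine : (gb * pp 1 k) (List.replicate (m + 2) true) = List.replicate (m + 2) true := by
        rw [List.replicate_succ, Equiv.Perm.mul_apply, pp_true]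
        rw [show (List.replicate (m + 1) true) = true :: List.replicate m true from
          List.replicate_succ .., hkap]
        simp [gbFun, gcFun, (gbcd_involutive (List.replicate m true)).2.2,
          ← List.replicate_succ]
      have hmap : (gb * pp 1 k) (false :: false :: x') = false :: true :: x' := by
        simp [Equiv.Perm.mul_apply, gbFun, gaFun]
      obtain ⟨h₂, hh₂, hsp₂, hap₂⟩ := same true x' y' hx hy
      refine ⟨h₂ * (gb * pp 1 k),
        mul_mem hh₂ (mul_mem gb_mem (KK_le_grig (ppKK hk).2)), ?_, ?_⟩
      · rw [Equiv.Perm.mul_apply, hspine, hsp₂]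
      · rw [Equiv.Perm.mul_apply, hmap, hap₂]
    · -- flip true → false
      obtain ⟨k, hk, hkap⟩ := Ktrans m true (List.replicate m true) (gdFun (List.replicate m true))
        (by simp) ((len_bcd _).2.2.trans (by simp))
      have hspine : (gb * pp 1 k) (List.replicate (m + 2) true) = List.replicate (m + 2) true := by
        rw [List.replicate_succ, Equiv.Perm.mul_apply, pp_true]
        rw [show (List.replicate (m + 1) true) = true :: List.replicate m true from
          List.replicate_succ .., hkap]
        simp [gbFun, gcFun, (gbcd_involutive (List.replicate m true)).2.2,
          ← List.replicate_succ]
      have hmap : (gb * pp 1 k) (false :: true :: x') = false :: false :: x' := by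
        simp [Equiv.Perm.mul_apply, gbFun, gaFun]
      obtain ⟨h₂, hh₂, hsp₂, hap₂⟩ := same false x' y' hx hy
      refine ⟨h₂ * (gb * pp 1 k),
        mul_mem hh₂ (mul_mem gb_mem (KK_le_grig (ppKK hk).2)), ?_, ?_⟩
      · rw [Equiv.Perm.mul_apply, hspine, hsp₂]
      · rw [Equiv.Perm.mul_apply, hmap, hap₂]
    · exact same true x' y' hx hy

theorem Ptrans : ∀ (n : ℕ) (u v : List Bool), u.length = n → v.length = n → cnt u = cnt v →
    ∃ h, h ∈ grig ∧ h (List.replicate n true) = List.replicate n true ∧ h u = v := by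
  intro n
  induction n with
  | zero =>
    intro u v hu hv _
    rw [List.length_eq_zero_iff] at hu hv; subst hu; subst hv
    exact ⟨1, one_mem _, rfl, rfl⟩
  | succ n ih =>
    intro u v hu hv hcnt
    rcases u with _ | ⟨s, u'⟩; · simp at hu
    rcases v with _ | ⟨s', v'⟩; · simp at hv
    simp only [List.length_cons, Nat.add_one_inj] at hu hv
    cases s <;> cases s'
    · obtain ⟨h, hh, hsp, hap⟩ := Qtrans n u' v' hu hv
      exact ⟨h, hh, hsp, hap⟩
    · simp at hcnt
    · simp at hcnt
    · simp only [cnt_true, Nat.add_one_inj] at hcnt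
      obtain ⟨h', hh', hsp', hap'⟩ := ih u' v' hu hv hcnt
      obtain ⟨y, hy⟩ := lift1 hh'
      refine ⟨pp y h', hy, ?_, ?_⟩
      · rw [List.replicate_succ, pp_true, hsp', ← List.replicate_succ]
      · rw [pp_true, hap']

theorem spine_mover : ∀ i : ℕ, ∃ g, g ∈ grig ∧
    ∀ n, i < n → cnt (g (List.replicate n true)) = i := by
  intro i
  induction i with
  | zero =>
    refine ⟨ga, ga_mem, ?_⟩
    intro n hn
    rcases n with _ | m; · omega
    rw [List.replicate_succ]
    simp [gaFun]
  | succ i ih =>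
    obtain ⟨g', hg', hap⟩ := ih
    obtain ⟨y, hy⟩ := lift1 hg'
    refine ⟨pp y g', hy, ?_⟩
    intro n hn
    rcases n with _ | m; · omega
    rw [List.replicate_succ, pp_true, cnt_true, hap m (by omega)]

end Trans
theorem grig_smul_def (g : grig) (u : List Bool) : g • u = (g : Equiv.Perm (List Bool)) u := rfl

theorem mem_grigP_iff (n : ℕ) (g : grig) :
    g ∈ grigP n ↔ (g : Equiv.Perm (List Bool)) (List.replicate n true) = List.replicate n true := by
  rw [grigP, MulAction.mem_stabilizer_iff, grig_smul_def]

theorem grigorchuk_parabolic_orbits' (n : ℕ) :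
    (∀ u v : List Bool, u.length = n → v.length = n →
        ((∃ g ∈ grigP n, g • u = v) ↔
          (u.takeWhile (fun s => s)).length = (v.takeWhile (fun s => s)).length)) ∧
      Nat.card (DoubleCoset.Quotient ((grigP n : Subgroup grig) : Set grig)
        ((grigP n : Subgroup grig) : Set grig)) = n + 1 := by
  constructor
  · intro u v hu hv
    constructor
    · rintro ⟨g, hgP, rfl⟩
      rw [mem_grigP_iff] at hgP
      rw [grig_smul_def]
      exact (cnt_stab_eq g.2 hgP hu).symm
    · intro hcnt
      obtain ⟨h, hh, hsp, hap⟩ := Ptrans n u v hu hv hcnt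
      exact ⟨⟨h, hh⟩, (mem_grigP_iff n _).mpr hsp, hap⟩
  · -- counting double cosets
    have hlen : ∀ g : grig, ((g : Equiv.Perm (List Bool)) (List.replicate n true)).length = n := by
      intro g; rw [(pres_grig g.2).1, List.length_replicate]
    have hcntlt : ∀ g : grig,
        cnt ((g : Equiv.Perm (List Bool)) (List.replicate n true)) < n + 1 := by
      intro g
      have := cnt_le ((g : Equiv.Perm (List Bool)) (List.replicate n true))
      rw [hlen g] at this; omega
    set H : Subgroup grig := grigP n with hH
    let f : grig → Fin (n + 1) := fun g =>
      ⟨cnt ((g : Equiv.Perm (List Bool)) (List.replicate n true)), hcntlt g⟩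
    have hf : ∀ a b : grig, DoubleCoset.setoid (H : Set grig) (H : Set grig) a b → f a = f b := by
      intro a b hab
      obtain ⟨p, hp, q, hq, rfl⟩ := DoubleCoset.rel_iff.mp hab
      rw [mem_grigP_iff] at hp hq
      have : ((p * a * q : grig) : Equiv.Perm (List Bool)) (List.replicate n true)
          = (p : Equiv.Perm (List Bool)) ((a : Equiv.Perm (List Bool)) (List.replicate n true)) := by
        simp only [Subgroup.coe_mul, Equiv.Perm.mul_apply, hq]
      apply Fin.ext
      simp only [f, this]
      exact (cnt_stab_eq p.2 hp (hlen a)).symm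
    let F : DoubleCoset.Quotient (H : Set grig) (H : Set grig) → Fin (n + 1) := Quotient.lift f hf
    have hFmk : ∀ a : grig, F (DoubleCoset.mk H H a) = f a := fun a => rfl
    have hinj : Function.Injective F := by
      intro q1 q2
      induction q1 using Quotient.inductionOn' with | h a =>
      induction q2 using Quotient.inductionOn' with | h b =>
      intro hab
      have hcnt : cnt ((a : Equiv.Perm (List Bool)) (List.replicate n true))
          = cnt ((b : Equiv.Perm (List Bool)) (List.replicate n true)) := by
        have := congrArg Fin.val hab
        exact this
      obtain ⟨h, hh, hsp, hap⟩ := Ptrans n _ _ (hlen a) (hlen b) hcnt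
      set p : grig := ⟨h, hh⟩ with hp
      have hpP : p ∈ H := (mem_grigP_iff n p).mpr hsp
      set q : grig := b⁻¹ * p * a with hqdef
      have hqP : q ∈ H := by
        rw [mem_grigP_iff]
        simp only [hqdef, Subgroup.coe_mul, Equiv.Perm.mul_apply]
        rw [hap]
        simp only [Subgroup.coe_inv, Equiv.Perm.coe_inv, Equiv.symm_apply_apply]
      show DoubleCoset.mk H H a = DoubleCoset.mk H H b
      rw [DoubleCoset.eq]
      exact ⟨p, hpP, q⁻¹, inv_mem hqP, by rw [hqdef]; group⟩
    have hsurj : Function.Surjective F := by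
      rintro ⟨i, hi⟩
      rcases Nat.lt_or_ge i n with hlt | hge
      · obtain ⟨g, hg, hap⟩ := spine_mover i
        refine ⟨DoubleCoset.mk H H ⟨g, hg⟩, ?_⟩
        rw [hFmk]
        exact Fin.ext (hap n hlt)
      · have hin : i = n := by omega
        refine ⟨DoubleCoset.mk H H 1, ?_⟩
        rw [hFmk]
        apply Fin.ext
        show cnt ((1 : Equiv.Perm (List Bool)) (List.replicate n true)) = i
        rw [hin]
        simp [cnt_replicate]
    rw [Nat.card_eq_of_bijective F ⟨hinj, hsurj⟩, Nat.card_eq_fintype_card, Fintype.card_fin]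

/-- In the Grigorchuk group, the parabolic subgroup `P_n = Stab_G(1^n)` has exactly
`n+1` orbits on the `n`-th level of the binary tree: two vertices of length `n` lie in
the same `P_n`-orbit iff they have the same number of leading `1`s, i.e. the orbits are
`{1^n}` and the sets `1^i 0 Σ^(n-1-i)` for `0 ≤ i < n`.  Equivalently, there are
exactly `n+1` double cosets `P_n g P_n` in `G`. -/
theorem grigorchuk_parabolic_orbits (n : ℕ) :
    (∀ u v : List Bool, u.length = n → v.length = n →
        ((∃ g ∈ grigP n, g • u = v) ↔
          (u.takeWhile (fun s => s)).length = (v.takeWhile (fun s => s)).length)) ∧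
      Nat.card (DoubleCoset.Quotient ((grigP n : Subgroup grig) : Set grig)
        ((grigP n : Subgroup grig) : Set grig)) = n + 1 := by
  exact grigorchuk_parabolic_orbits' n
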